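/- Let q be a prime power, F = 𝔽_q, and let I ⊆ F[X₁,...,X_m] be an ideal. Let I_q = I + ⟨X₁^q − X₁, ..., X_m^q − X_m⟩ and let V = {P ∈ F^m : f(P) = 0 for all f ∈ I} be the set of F-rational points of the variety of I. Then the F-linear map ev : F[X₁,...,X_m]/I_q → F^V defined by ev(f + I_q) = (f(P))_{P ∈ V} is well defined and is an isomorphism of F-vector spaces (indeed of F-algebras, where F^V carries the componentwise product). -/

import Mathlib

open MvPolynomial

/-- Reduced exponent: for `d ≥ 1`, a representative in `[1, q-1]` congruent to `d`
mod `q-1`. -/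
private def redExp (q d : ℕ) : ℕ := if d = 0 then 0 else (d - 1) % (q - 1) + 1

private lemma redExp_le {q : ℕ} (hq : 1 < q) (d : ℕ) : redExp q d ≤ q - 1 := by
  unfold redExp
  split
  · omega
  · have := Nat.mod_lt (d - 1) (y := q - 1) (by omega)
    omega

private lemma pow_redExp {A : Type*} [CommRing A] {q : ℕ} (hq : 1 < q) {x : A}
    (hx : x ^ q = x) (d : ℕ) : x ^ d = x ^ redExp q d := by
  unfold redExp
  split
  · simp_all
  · have key : ∀ k m : ℕ, x ^ (m + 1 + (q - 1) * k) = x ^ (m + 1) := by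
      intro k
      induction k with
      | zero => simp
      | succ k ih =>
        intro m
        have h1 : m + 1 + (q - 1) * (k + 1) = (m + (q - 1) * k) + q := by
          rw [Nat.mul_succ]; omega
        have h2 : m + (q - 1) * k + 1 = m + 1 + (q - 1) * k := by omega
        calc x ^ (m + 1 + (q - 1) * (k + 1))
            = x ^ (m + (q - 1) * k) * x ^ q := by rw [h1, pow_add]
          _ = x ^ (m + (q - 1) * k) * x := by rw [hx]
          _ = x ^ (m + (q - 1) * k + 1) := by rw [pow_succ]
          _ = x ^ (m + 1 + (q - 1) * k) := by rw [h2]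
          _ = x ^ (m + 1) := ih m
    have hd : d = (d - 1) % (q - 1) + 1 + (q - 1) * ((d - 1) / (q - 1)) := by
      have := Nat.mod_add_div (d - 1) (q - 1)
      omega
    conv_lhs => rw [hd]
    exact key _ _

/-- Every polynomial is congruent, modulo any ideal containing the field equations,
to a polynomial with all exponents at most `q - 1`. -/
private lemma exists_reduce (F : Type*) [Field F] [Fintype F] (m : ℕ)
    (J : Ideal (MvPolynomial (Fin m) F))
    (hJ : ∀ j : Fin m, (X j : MvPolynomial (Fin m) F) ^ (Fintype.card F) - X j ∈ J)
    (p : MvPolynomial (Fin m) F) :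
    ∃ r ∈ restrictDegree (Fin m) F (Fintype.card F - 1),
      Ideal.Quotient.mk J p = Ideal.Quotient.mk J r := by
  classical
  have hq : 1 < Fintype.card F := Fintype.one_lt_card
  induction p using MvPolynomial.induction_on' with
  | monomial u a =>
    set e : Fin m →₀ ℕ := Finsupp.equivFunOnFinite.symm
      (fun j => redExp (Fintype.card F) (u j)) with he
    have heval : ∀ j, e j = redExp (Fintype.card F) (u j) := fun j => rfl
    refine ⟨monomial e a, ?_, ?_⟩
    · rw [mem_restrictDegree]
      intro s hs i
      rcases eq_or_ne a 0 with rfl | ha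
      · simp at hs
      · rw [support_monomial, if_neg ha] at hs
        rw [Finset.mem_singleton] at hs
        subst hs
        rw [heval]
        exact redExp_le hq _
    · have hmk : ∀ j : Fin m,
          (Ideal.Quotient.mk J (X j)) ^ (Fintype.card F) = Ideal.Quotient.mk J (X j) := by
        intro j
        rw [← map_pow, Ideal.Quotient.eq]
        exact hJ j
      rw [monomial_eq, monomial_eq,
        Finsupp.prod_fintype _ _ (fun j => pow_zero _),
        Finsupp.prod_fintype _ _ (fun j => pow_zero _)]
      simp only [map_mul, map_prod, map_pow]
      congr 1
      refine Finset.prod_congr rfl fun j _ => ?_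
      rw [heval]
      exact pow_redExp hq (hmk j) (u j)
  | add p p' ihp ihp' =>
    obtain ⟨r1, hr1, e1⟩ := ihp
    obtain ⟨r2, hr2, e2⟩ := ihp'
    exact ⟨r1 + r2, Submodule.add_mem _ hr1 hr2, by rw [map_add, map_add, e1, e2]⟩

/-- A polynomial over a finite field with all exponents at most `q - 1` that
vanishes at every point is the zero polynomial (universe-adjusted version of
`MvPolynomial.eq_zero_of_eval_eq_zero`). -/
private lemma eq_zero_of_eval_eq_zero' {F : Type u} [Field F] [Fintype F] {m : ℕ}
    (r : MvPolynomial (Fin m) F)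
    (h : ∀ v : Fin m → F, eval v r = 0)
    (hr : r ∈ restrictDegree (Fin m) F (Fintype.card F - 1)) : r = 0 := by
  classical
  set f : Fin m → ULift.{u} (Fin m) := fun j => ULift.up j with hf
  have hfinj : Function.Injective f := fun a b hab => by
    simpa [hf] using congrArg ULift.down hab
  set r' : MvPolynomial (ULift.{u} (Fin m)) F := rename f r with hr'
  have hr'mem : r' ∈ restrictDegree (ULift.{u} (Fin m)) F (Fintype.card F - 1) := by
    rw [mem_restrictDegree]
    intro s hs i
    rw [hr'] at hs
    rw [MvPolynomial.support_rename_of_injective hfinj] at hs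
    obtain ⟨t, ht, rfl⟩ := Finset.mem_image.mp hs
    have : i = f i.down := rfl
    rw [this, Finsupp.mapDomain_apply hfinj]
    exact (mem_restrictDegree _ _ _).mp hr t ht i.down
  have hr'eval : ∀ v : ULift.{u} (Fin m) → F, eval v r' = 0 := by
    intro v
    rw [hr', eval_rename]
    exact h _
  have : r' = 0 := MvPolynomial.eq_zero_of_eval_eq_zero (σ := ULift.{u} (Fin m)) (K := F) r' hr'eval hr'mem
  have hrinj := MvPolynomial.rename_injective (R := F) f hfinj
  apply hrinj
  rw [← hr'] at *
  simpa using this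

/-- A polynomial vanishing at all points of `F^m` lies in the ideal generated by
the field equations. -/
private lemma mem_span_of_eval_zero (F : Type u) [Field F] [Fintype F] (m : ℕ)
    (p : MvPolynomial (Fin m) F) (h : ∀ v : Fin m → F, eval v p = 0) :
    p ∈ Ideal.span (Set.range
      (fun j : Fin m => (X j : MvPolynomial (Fin m) F) ^ (Fintype.card F) - X j)) := by
  set J := Ideal.span (Set.range
    (fun j : Fin m => (X j : MvPolynomial (Fin m) F) ^ (Fintype.card F) - X j)) with hJdef
  have hJgen : ∀ j : Fin m, (X j : MvPolynomial (Fin m) F) ^ (Fintype.card F) - X j ∈ J :=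
    fun j => Ideal.subset_span ⟨j, rfl⟩
  have hJeval : ∀ g ∈ J, ∀ v : Fin m → F, eval v g = 0 := by
    intro g hg v
    have hle : J ≤ RingHom.ker (eval v : MvPolynomial (Fin m) F →+* F) := by
      rw [hJdef, Ideal.span_le]
      rintro _ ⟨j, rfl⟩
      simp [RingHom.mem_ker, FiniteField.pow_card]
    exact hle hg
  obtain ⟨r, hr, he⟩ := exists_reduce F m J hJgen p
  have hsub : p - r ∈ J := by rwa [← Ideal.Quotient.eq]
  have hr0 : r = 0 := by
    refine eq_zero_of_eval_eq_zero' r (fun v => ?_) hr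
    have h1 := hJeval _ hsub v
    rw [map_sub] at h1
    have h2 : eval v p = eval v r := sub_eq_zero.mp h1
    rw [← h2, h v]
  rw [hr0, sub_zero] at hsub
  exact hsub

/-- The evaluation map `ev : F[X_1,...,X_m]/I_q → F^V`, `f + I_q ↦ (f(P))_{P ∈ V}`,
where `I_q = I + ⟨X_j^q - X_j⟩` and `V` is the set of `F`-rational points of the
variety of `I`, is well defined and an isomorphism of `F`-algebras (hence of
`F`-vector spaces). -/
theorem evaluation_map_isomorphism
    (F : Type*) [Field F] [Fintype F] (m : ℕ)
    (I : Ideal (MvPolynomial (Fin m) F))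
    (Iq : Ideal (MvPolynomial (Fin m) F))
    (hIq : Iq = I ⊔ Ideal.span (Set.range
      (fun j : Fin m => MvPolynomial.X j ^ (Fintype.card F) - MvPolynomial.X j)))
    (V : Set (Fin m → F))
    (hV : V = {P : Fin m → F | ∀ f ∈ I, MvPolynomial.eval P f = 0}) :
    ∃ e : (MvPolynomial (Fin m) F ⧸ Iq) ≃ₐ[F] (V → F),
      ∀ f : MvPolynomial (Fin m) F,
        e (Ideal.Quotient.mk Iq f) = fun P : V => MvPolynomial.eval (P : Fin m → F) f := by
  classical
  have hq : 1 < Fintype.card F := Fintype.one_lt_card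
  set J := Ideal.span (Set.range
    (fun j : Fin m => (X j : MvPolynomial (Fin m) F) ^ (Fintype.card F) - X j)) with hJdef
  have hJle : J ≤ Iq := by rw [hIq]; exact le_sup_right
  have hIle : I ≤ Iq := by rw [hIq]; exact le_sup_left
  have hVmem : ∀ a : Fin m → F, a ∈ V → ∀ f ∈ I, eval a f = 0 := by
    intro a ha
    rw [hV] at ha
    exact ha
  -- the evaluation algebra homomorphism
  let Φ : MvPolynomial (Fin m) F →ₐ[F] (V → F) :=
    { toFun := fun f P => eval (P : Fin m → F) f
      map_one' := by funext P; simp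
      map_mul' := by intro f g; funext P; simp
      map_zero' := by funext P; simp
      map_add' := by intro f g; funext P; simp
      commutes' := by
        intro a; funext P
        simp [MvPolynomial.algebraMap_eq, Pi.algebraMap_apply] }
  have hΦ : ∀ (f : MvPolynomial (Fin m) F) (P : V),
      Φ f P = eval (P : Fin m → F) f := fun f P => rfl
  -- Iq evaluates to zero on V
  have hIqeval : ∀ (P : V) (f : MvPolynomial (Fin m) F), f ∈ Iq →
      eval (P : Fin m → F) f = 0 := by
    rintro ⟨Pv, hPv⟩ f hf
    rw [hIq] at hf
    obtain ⟨g, hg, h, hh, rfl⟩ := Submodule.mem_sup.mp hf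
    have hgP : eval Pv g = 0 := hVmem Pv hPv g hg
    have hhP : eval Pv h = 0 := by
      have hle : J ≤ RingHom.ker (eval Pv : MvPolynomial (Fin m) F →+* F) := by
        rw [hJdef, Ideal.span_le]
        rintro _ ⟨j, rfl⟩
        simp [RingHom.mem_ker, FiniteField.pow_card]
      exact hle hh
    show eval Pv (g + h) = 0
    rw [map_add, hgP, hhP, add_zero]
  -- kernel of Φ is exactly Iq
  have hker : RingHom.ker Φ = Iq := by
    refine le_antisymm ?_ ?_
    · intro f hf
      have hfV : ∀ P : V, eval (P : Fin m → F) f = 0 := by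
        intro P
        have h0 : Φ f = 0 := hf
        have := congrFun h0 P
        simpa [hΦ] using this
      -- decompose f using indicator polynomials
      set g := f - ∑ a : Fin m → F, C (eval a f) * indicator a with hg
      have hgJ : g ∈ J := by
        refine mem_span_of_eval_zero F m g (fun v => ?_)
        rw [hg, map_sub, map_sum]
        have hsum : ∑ a : Fin m → F, eval v (C (eval a f) * indicator a) = eval v f := by
          rw [Finset.sum_eq_single v]
          · simp [eval_indicator_apply_eq_one]
          · intro b _ hb
            rw [map_mul, eval_indicator_apply_eq_zero v b (Ne.symm hb), mul_zero]
          · intro hv; exact absurd (Finset.mem_univ v) hv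
        rw [hsum, sub_self]
      have hterm : ∀ a : Fin m → F, C (eval a f) * indicator a ∈ Iq := by
        intro a
        by_cases ha : a ∈ V
        · have : eval a f = 0 := hfV ⟨a, ha⟩
          rw [this, map_zero, zero_mul]
          exact Ideal.zero_mem _
        · have ha' : ¬ ∀ f ∈ I, eval a f = 0 := fun hh => ha (hV ▸ hh)
          push_neg at ha'
          obtain ⟨h0, h0I, h0a⟩ := ha'
          have hpow : h0 ^ (Fintype.card F - 1) ∈ I := by
            have hc : Fintype.card F - 1 = (Fintype.card F - 2) + 1 := by omega
            rw [hc, pow_succ]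
            exact Ideal.mul_mem_left _ _ h0I
          have hI1 : C (eval a f) * (indicator a * h0 ^ (Fintype.card F - 1)) ∈ I :=
            Ideal.mul_mem_left _ _ (Ideal.mul_mem_left _ _ hpow)
          have hd : C (eval a f) * indicator a
              - C (eval a f) * (indicator a * h0 ^ (Fintype.card F - 1)) ∈ J := by
            refine mem_span_of_eval_zero F m _ (fun v => ?_)
            simp only [map_sub, map_mul, eval_C, map_pow]
            by_cases hv : v = a
            · subst hv
              rw [eval_indicator_apply_eq_one,
                FiniteField.pow_card_sub_one_eq_one _ h0a]
              ring
            · rw [eval_indicator_apply_eq_zero v a hv]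
              ring
          have := Ideal.add_mem Iq (hJle hd) (hIle hI1)
          simpa using this
      have hfe : f = g + ∑ a : Fin m → F, C (eval a f) * indicator a := by rw [hg]; ring
      rw [hfe]
      exact Ideal.add_mem _ (hJle hgJ) (Ideal.sum_mem _ (fun a _ => hterm a))
    · intro f hf
      have : Φ f = 0 := by
        funext P
        rw [hΦ]
        exact hIqeval P f hf
      exact this
  -- surjectivity of Φ
  have hsurj : Function.Surjective Φ := by
    intro g
    refine ⟨∑ a : Fin m → F, C (if ha : a ∈ V then g ⟨a, ha⟩ else 0) * indicator a, ?_⟩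
    funext P
    rw [hΦ, map_sum, Finset.sum_eq_single (P : Fin m → F)]
    · rw [map_mul, eval_indicator_apply_eq_one, mul_one, eval_C, dif_pos P.2]
    · intro b _ hb
      rw [map_mul, eval_indicator_apply_eq_zero _ b (Ne.symm hb), mul_zero]
    · intro hv; exact absurd (Finset.mem_univ _) hv
  refine ⟨(Ideal.quotientEquivAlgOfEq F hker.symm).trans
    (Ideal.quotientKerAlgEquivOfSurjective hsurj), fun f => ?_⟩
  rw [AlgEquiv.trans_apply, Ideal.quotientEquivAlgOfEq_mk]
  show Ideal.quotientKerAlgEquivOfSurjective hsurj (Ideal.Quotient.mk _ f) = _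
  erw [Ideal.quotientKerAlgEquivOfSurjective_apply]
  rfl
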